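/- Let V be a finite-dimensional vector space with nondegenerate reflexive bilinear form ξ whose isotropic vectors form a hyperplane H, and let A be a 3-dimensional subspace not contained in H with L := A ∩ H. If L is regular, then A is regular, Hrd(A) := A ∩ L^⊥ is a 1-dimensional subspace p not contained in H, and a 2-dimensional subspace K ⊆ A with K ⊄ H is non-regular if and only if p ⊆ K. -/

import Mathlib

open Module Submodule

/-- If `W ⊄ H` and `H` is a hyperplane then `W ⊓ H` is a hyperplane of `W`. -/
lemma aux_inf_hyp {F V : Type*} [Field F] [AddCommGroup V] [Module F V]
    [FiniteDimensional F V] {H W : Submodule F V}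
    (hHhyp : Module.finrank F H + 1 = Module.finrank F V) (hW : ¬ W ≤ H) :
    Module.finrank F (W ⊓ H : Submodule F V) + 1 = Module.finrank F W := by
  have hlt : H < W ⊔ H := lt_of_le_of_ne le_sup_right
    (fun h => hW (le_sup_left.trans h.ge))
  have h1 : Module.finrank F H < Module.finrank F (W ⊔ H : Submodule F V) :=
    Submodule.finrank_lt_finrank_of_lt hlt
  have h2 : Module.finrank F (W ⊔ H : Submodule F V) ≤ Module.finrank F V :=
    Submodule.finrank_le _
  have h3 := Submodule.finrank_sup_add_finrank_inf_eq W H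
  omega

open LinearMap.BilinForm in
/-- If A ⊄ H is a plane with A ∩ H regular, then A is regular, Hrd(A) is a
point p off H, and an affine line K on A is nonregular iff p ∈ K. -/
theorem stmt12 {F V : Type*} [Field F] [AddCommGroup V] [Module F V]
    [FiniteDimensional F V] [CharP F 2] [PerfectField F]
    (ξ : LinearMap.BilinForm F V) (hnd : ξ.Nondegenerate) (hrefl : ξ.IsRefl)
    (H : Submodule F V) (hH : ∀ v : V, ξ v v = 0 ↔ v ∈ H)
    (hHhyp : Module.finrank F H + 1 = Module.finrank F V)
    (A : Submodule F V) (hA3 : Module.finrank F A = 3) (hA : ¬ A ≤ H)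
    (hLreg : (A ⊓ H) ⊓ ξ.orthogonal (A ⊓ H) = ⊥) :
    A ⊓ ξ.orthogonal A = ⊥ ∧
      ∃ p : V, p ≠ 0 ∧ A ⊓ ξ.orthogonal (A ⊓ H) = Submodule.span F {p} ∧ p ∉ H ∧
        ∀ K : Submodule F V, K ≤ A → Module.finrank F K = 2 → ¬ K ≤ H →
          (K ⊓ ξ.orthogonal K ≠ ⊥ ↔ p ∈ K) := by
  set L := A ⊓ H with hLdef
  set oL := ξ.orthogonal L with hoLdef
  have hLA : L ≤ A := inf_le_left
  have hLH : L ≤ H := inf_le_right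
  have hn3 : 3 ≤ Module.finrank F V := hA3 ▸ Submodule.finrank_le A
  have hrL : Module.finrank F L = 2 := by
    have h := aux_inf_hyp hHhyp hA
    rw [← hLdef] at h
    omega
  have hroL : Module.finrank F oL = Module.finrank F V - 2 := by
    rw [hoLdef, finrank_orthogonal hnd, hrL]
  set P := A ⊓ oL with hPdef
  have hPL : P ⊓ L = ⊥ := by
    rw [eq_bot_iff, ← hLreg]
    intro x hx
    exact ⟨hx.2, hx.1.2⟩
  have hrP : Module.finrank F P = 1 := by
    have hge : 1 ≤ Module.finrank F P := by
      have h1 := Submodule.finrank_sup_add_finrank_inf_eq A oL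
      rw [← hPdef] at h1
      have h2 : Module.finrank F (A ⊔ oL : Submodule F V) ≤ Module.finrank F V :=
        Submodule.finrank_le _
      have h4 : Module.finrank F A = 3 := hA3
      omega
    have hle : Module.finrank F P ≤ 1 := by
      have h1 := Submodule.finrank_sup_add_finrank_inf_eq P L
      rw [hPL, finrank_bot] at h1
      have h2 : Module.finrank F (P ⊔ L : Submodule F V) ≤ Module.finrank F A := by
        exact Submodule.finrank_mono (sup_le inf_le_left hLA)
      omega
    omega
  -- extract the generator p
  have hPne : P ≠ ⊥ := by
    intro h; rw [h, finrank_bot] at hrP; omega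
  obtain ⟨p, hpP, hp0⟩ := Submodule.exists_mem_ne_zero_of_ne_bot hPne
  have hPspan : P = Submodule.span F {p} := by
    refine (Submodule.eq_of_le_of_finrank_le ((Submodule.span_singleton_le_iff_mem _ _).2 hpP) ?_).symm
    rw [hrP, finrank_span_singleton hp0]
  have hpA : p ∈ A := hpP.1
  have hpoL : p ∈ oL := hpP.2
  have hpH : p ∉ H := by
    intro hpH
    have : p ∈ P ⊓ L := ⟨hpP, hpA, hpH⟩
    rw [hPL] at this
    exact hp0 this
  -- A regular
  have hAreg : A ⊓ ξ.orthogonal A = ⊥ := by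
    rw [eq_bot_iff, ← hLreg]
    intro x ⟨hxA, hxO⟩
    have hxx : ξ x x = 0 := hxO x hxA
    have hxL : x ∈ L := ⟨hxA, (hH x).1 hxx⟩
    exact ⟨hxL, LinearMap.BilinForm.orthogonal_le hLA hxO⟩
  refine ⟨hAreg, p, hp0, hPspan, hpH, fun K hKA hK2 hKH => ?_⟩
  -- the line q of K in H
  have hrKH : Module.finrank F (K ⊓ H : Submodule F V) = 1 := by
    have := aux_inf_hyp hHhyp hKH; omega
  have hKHne : (K ⊓ H : Submodule F V) ≠ ⊥ := by
    intro h; rw [h, finrank_bot] at hrKH; omega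
  obtain ⟨q, hqKH, hq0⟩ := Submodule.exists_mem_ne_zero_of_ne_bot hKHne
  have hKHspan : (K ⊓ H : Submodule F V) = Submodule.span F {q} := by
    refine (Submodule.eq_of_le_of_finrank_le
      ((Submodule.span_singleton_le_iff_mem _ _).2 hqKH) ?_).symm
    rw [hrKH, finrank_span_singleton hq0]
  have hqK : q ∈ K := hqKH.1
  have hqH : q ∈ H := hqKH.2
  have hqL : q ∈ L := ⟨hKA hqK, hqH⟩
  have hξpq : ξ p q = 0 := hrefl q p (hpoL q hqL)
  have hξqq : ξ q q = 0 := (hH q).2 hqH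
  constructor
  · -- nonregular → p ∈ K
    intro hne
    by_contra hpK
    apply hne
    rw [eq_bot_iff]
    intro v ⟨hvK, hvO⟩
    have hvv : ξ v v = 0 := hvO v hvK
    have hvH : v ∈ H := (hH v).1 hvv
    have hvKH : v ∈ Submodule.span F {q} := hKHspan ▸ (⟨hvK, hvH⟩ : v ∈ K ⊓ H)
    by_contra hv0
    have hv0' : v ≠ 0 := fun h => hv0 (h ▸ Submodule.zero_mem _)
    have hvL : v ∈ L := ⟨hKA hvK, hvH⟩
    -- get r ∈ K, r ∉ H
    obtain ⟨r, hrK, hrH⟩ := SetLike.not_le_iff_exists.1 hKH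
    -- A = L ⊔ P
    have hALP : A = L ⊔ P := by
      have hPA : P ≤ A := inf_le_left
      refine (Submodule.eq_of_le_of_finrank_le (sup_le hLA hPA) ?_).symm
      have h1 := Submodule.finrank_sup_add_finrank_inf_eq L P
      rw [inf_comm, hPL, finrank_bot] at h1
      have h4 : Module.finrank F A = 3 := hA3
      omega
    obtain ⟨l, hlL, m, hmP, hrlm⟩ := Submodule.mem_sup.1 (hALP ▸ hKA hrK)
    rw [hPspan] at hmP
    obtain ⟨c, hc⟩ := Submodule.mem_span_singleton.1 hmP
    have hc0 : c ≠ 0 := by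
      rintro rfl
      rw [zero_smul] at hc
      exact hrH (hLH (show r ∈ L by rw [← hrlm, ← hc, add_zero]; exact hlL))
    -- l ∉ span v
    have hlv : l ∉ Submodule.span F {v} := by
      intro hlv
      apply hpK
      have hlK : l ∈ K := Submodule.span_singleton_le_iff_mem v K |>.2 hvK hlv
      have hmK : m ∈ K := by
        have : m = r - l := by rw [← hrlm]; abel
        rw [this]; exact Submodule.sub_mem _ hrK hlK
      rw [← hc] at hmK
      have := Submodule.smul_mem K c⁻¹ hmK
      rwa [smul_smul, inv_mul_cancel₀ hc0, one_smul] at this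
    -- L = span v ⊔ span l
    have hLvl : L = Submodule.span F {v} ⊔ Submodule.span F {l} := by
      refine (Submodule.eq_of_le_of_finrank_le (sup_le
        ((Submodule.span_singleton_le_iff_mem _ _).2 hvL)
        ((Submodule.span_singleton_le_iff_mem _ _).2 hlL)) ?_).symm
      have hl0 : l ≠ 0 := fun h => hlv (h ▸ Submodule.zero_mem _)
      have hinf : Submodule.span F {v} ⊓ Submodule.span F {l} = ⊥ := by
        rw [eq_bot_iff]
        intro x ⟨hx1, hx2⟩
        obtain ⟨a, ha⟩ := Submodule.mem_span_singleton.1 hx2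
        rcases eq_or_ne a 0 with rfl | ha0
        · simpa [← ha] using (Submodule.mem_bot F).2 rfl
        · exfalso; apply hlv
          rw [← ha] at hx1
          have := Submodule.smul_mem (Submodule.span F {v}) a⁻¹ hx1
          rwa [smul_smul, inv_mul_cancel₀ ha0, one_smul] at this
      have h1 := Submodule.finrank_sup_add_finrank_inf_eq
        (Submodule.span F {v}) (Submodule.span F {l})
      rw [hinf, finrank_bot, finrank_span_singleton hv0', finrank_span_singleton hl0] at h1
      omega
    -- v ∈ L ⊓ oL
    have hξpv : ξ p v = 0 := hrefl v p (hpoL v hvL)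
    have hξlv : ξ l v = 0 := by
      have hξrv : ξ r v = 0 := hvO r hrK
      have : l = r - c • p := by rw [← hc] at hrlm; rw [← hrlm]; abel
      rw [this]
      simp [hξrv, hξpv]
    have : v ∈ L ⊓ oL := by
      refine ⟨hvL, fun n hnL => ?_⟩
      rw [hLvl] at hnL
      obtain ⟨x, hx, y, hy, hn⟩ := Submodule.mem_sup.1 hnL
      obtain ⟨a, ha⟩ := Submodule.mem_span_singleton.1 hx
      obtain ⟨b, hb⟩ := Submodule.mem_span_singleton.1 hy
      show ξ n v = 0
      rw [← hn, ← ha, ← hb]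
      simp [hvv, hξlv]
    rw [hLreg] at this
    exact hv0' this
  · -- p ∈ K → nonregular
    intro hpK
    have hKspan : K = Submodule.span F {p} ⊔ Submodule.span F {q} := by
      refine (Submodule.eq_of_le_of_finrank_le (sup_le
        ((Submodule.span_singleton_le_iff_mem _ _).2 hpK)
        ((Submodule.span_singleton_le_iff_mem _ _).2 hqK)) ?_).symm
      have hinf : Submodule.span F {p} ⊓ Submodule.span F {q} = ⊥ := by
        rw [eq_bot_iff]
        intro x ⟨hx1, hx2⟩
        obtain ⟨a, ha⟩ := Submodule.mem_span_singleton.1 hx1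
        rcases eq_or_ne a 0 with rfl | ha0
        · simpa [← ha] using (Submodule.mem_bot F).2 rfl
        · exfalso
          apply hpH
          rw [← ha] at hx2
          have := Submodule.smul_mem (Submodule.span F {q}) a⁻¹ hx2
          rw [smul_smul, inv_mul_cancel₀ ha0, one_smul] at this
          exact (Submodule.span_singleton_le_iff_mem q H).2 hqH this
      have h1 := Submodule.finrank_sup_add_finrank_inf_eq
        (Submodule.span F {p}) (Submodule.span F {q})
      rw [hinf, finrank_bot, finrank_span_singleton hp0, finrank_span_singleton hq0] at h1
      omega
    have hqO : q ∈ ξ.orthogonal K := by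
      intro k hk
      rw [hKspan] at hk
      obtain ⟨x, hx, y, hy, hkxy⟩ := Submodule.mem_sup.1 hk
      obtain ⟨a, ha⟩ := Submodule.mem_span_singleton.1 hx
      obtain ⟨b, hb⟩ := Submodule.mem_span_singleton.1 hy
      show ξ k q = 0
      rw [← hkxy, ← ha, ← hb]
      simp [hξpq, hξqq]
    intro h
    have : q ∈ K ⊓ ξ.orthogonal K := ⟨hqK, hqO⟩
    rw [h] at this
    exact hq0 this
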